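/- Let ι be a nonempty finite index set, c : ι → ℂ, v ∈ ι, and ε ≥ 0 with (|ι| − 1)·ε ≤ 1/2, where |ι| is the cardinality of ι. Suppose ∑_{i ∈ ι} c_i = 1 and |c_i| ≤ ε·|c_v| for every i ≠ v. Then c_v ≠ 0 and the principal complex logarithm satisfies |log c_v| ≤ 2(|ι| − 1)·ε; in particular |log|c_v|| ≤ 2(|ι| − 1)·ε and |arg c_v| ≤ 2(|ι| − 1)·ε. -/

import Mathlib

/-- If `∑ c_i = 1` and all terms except `c_v` are small compared to `c_v`
(`|c_i| ≤ ε |c_v|` with `(|ι|−1)ε ≤ 1/2`), then `c_v ≠ 0` and the principal logarithm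
of `c_v` is small: `|log c_v| ≤ 2(|ι|−1)ε`; in particular both `|log |c_v||` and
`|arg c_v|` are bounded by `2(|ι|−1)ε`. -/
theorem stmt_1 (ι : Type*) [Fintype ι] [Nonempty ι] (c : ι → ℂ) (v : ι)
    (ε : ℝ) (hε : 0 ≤ ε) (hcard : ((Fintype.card ι : ℝ) - 1) * ε ≤ 1 / 2)
    (hsum : ∑ i, c i = 1)
    (hbound : ∀ i, i ≠ v → ‖c i‖ ≤ ε * ‖c v‖) :
    c v ≠ 0 ∧
      ‖Complex.log (c v)‖ ≤ 2 * ((Fintype.card ι : ℝ) - 1) * ε ∧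
      |Real.log (‖c v‖)| ≤ 2 * ((Fintype.card ι : ℝ) - 1) * ε ∧
      |Complex.arg (c v)| ≤ 2 * ((Fintype.card ι : ℝ) - 1) * ε := by
  classical
  set δ := ((Fintype.card ι : ℝ) - 1) * ε with hδ
  have hcard1 : (1 : ℝ) ≤ (Fintype.card ι : ℝ) := by
    exact_mod_cast Fintype.card_pos
  have hδ0 : 0 ≤ δ := mul_nonneg (by linarith) hε
  have h1 : ‖1 - c v‖ ≤ δ * ‖c v‖ := by
    have hset : (1 : ℂ) - c v = ∑ i ∈ Finset.univ.erase v, c i := by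
      rw [Finset.sum_erase_eq_sub (Finset.mem_univ v), hsum]
    rw [hset]
    calc ‖∑ i ∈ Finset.univ.erase v, c i‖
        ≤ ∑ i ∈ Finset.univ.erase v, ‖c i‖ :=
          norm_sum_le _ _
      _ ≤ ∑ _i ∈ Finset.univ.erase v, ε * ‖c v‖ :=
          Finset.sum_le_sum (fun i hi => hbound i (Finset.ne_of_mem_erase hi))
      _ = (Finset.univ.erase v).card * (ε * ‖c v‖) := by
          rw [Finset.sum_const, nsmul_eq_mul]
      _ = δ * ‖c v‖ := by
          rw [Finset.card_erase_of_mem (Finset.mem_univ v), Finset.card_univ]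
          have hc : ((Fintype.card ι - 1 : ℕ) : ℝ) = (Fintype.card ι : ℝ) - 1 := by
            rw [Nat.cast_sub Fintype.card_pos]; simp
          rw [hc, hδ]; ring
  have habs1 : (1 : ℝ) ≤ ‖c v‖ + ‖1 - c v‖ := by
    calc (1 : ℝ) = ‖c v + (1 - c v)‖ := by simp
      _ ≤ _ := norm_add_le _ _
  have hA0 : (0 : ℝ) ≤ ‖c v‖ := norm_nonneg _
  have hw : (2/3 : ℝ) ≤ ‖c v‖ := by nlinarith
  have hApos : (0 : ℝ) < ‖c v‖ := by linarith
  have hne : c v ≠ 0 := by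
    intro h; rw [h] at hw; simp at hw; linarith
  -- real part is positive, so arg ≠ π
  have h2 : ‖1 - c v‖ ≤ ‖c v‖ := by nlinarith
  have hre : 0 < (c v).re := by
    have h3 : Complex.normSq (1 - c v) ≤ Complex.normSq (c v) := by
      rw [← Complex.sq_norm, ← Complex.sq_norm]
      exact pow_le_pow_left₀ (norm_nonneg _) h2 2
    simp only [Complex.normSq_apply, Complex.sub_re, Complex.sub_im, Complex.one_re,
      Complex.one_im] at h3
    nlinarith
  have harg : (c v).arg ≠ Real.pi := by
    rw [Ne, Complex.arg_eq_pi_iff]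
    rintro ⟨h, -⟩; linarith
  -- the inverse is close to 1
  have hu : ‖(c v)⁻¹ - 1‖ ≤ δ := by
    have heq : (c v)⁻¹ - 1 = (1 - c v) / c v := by field_simp
    rw [heq, norm_div, div_le_iff₀ hApos]
    exact h1
  have hkey : ‖Complex.log (c v)‖ ≤ (3/2) * δ := by
    have h4 : Complex.log ((c v)⁻¹) = - Complex.log (c v) := Complex.log_inv _ harg
    have h5 : ‖Complex.log (1 + ((c v)⁻¹ - 1))‖ ≤ 3/2 * ‖(c v)⁻¹ - 1‖ :=
      Complex.norm_log_one_add_half_le_self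
        (by simpa using hu.trans hcard)
    have heq1 : (1 : ℂ) + ((c v)⁻¹ - 1) = (c v)⁻¹ := by ring
    rw [heq1, h4, norm_neg] at h5
    calc ‖Complex.log (c v)‖ = ‖Complex.log (c v)‖ := rfl
      _ ≤ 3/2 * ‖(c v)⁻¹ - 1‖ := h5
      _ ≤ 3/2 * δ := by
          have : ‖(c v)⁻¹ - 1‖ = ‖(c v)⁻¹ - 1‖ := rfl
          rw [this]; linarith
  have hfin : ‖Complex.log (c v)‖ ≤ 2 * ((Fintype.card ι : ℝ) - 1) * ε := by
    calc ‖Complex.log (c v)‖ ≤ (3/2) * δ := hkey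
      _ ≤ 2 * δ := by linarith
      _ = 2 * ((Fintype.card ι : ℝ) - 1) * ε := by rw [hδ]; ring
  refine ⟨hne, hfin, ?_, ?_⟩
  · calc |Real.log (‖c v‖)| = |(Complex.log (c v)).re| := by
          rw [Complex.log_re]
      _ ≤ ‖Complex.log (c v)‖ := Complex.abs_re_le_norm _
      _ ≤ _ := hfin
  · calc |(c v).arg| = |(Complex.log (c v)).im| := by rw [Complex.log_im]
      _ ≤ ‖Complex.log (c v)‖ := Complex.abs_im_le_norm _
      _ ≤ _ := hfin
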